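/- (The bracket on 1-forms extends the Poisson bracket of local functionals.) Let f, g ∈ 𝒜 and set α_i := δf/δu^i = Σ_t (−1)^t ∂_x^t(∂f/∂u^i_{(t)}) and β_j := δg/δu^j = Σ_t (−1)^t ∂_x^t(∂g/∂u^j_{(t)}). Then for every i, {α,β}_i = δh/δu^i in 𝒜, where h := Σ_{k,l} (δf/δu^k) η^{kl} ∂_x(δg/δu^l) is the density of the Poisson bracket { ∫f dx, ∫g dx } of the local functionals; that is, {δF, δG} = δ{F, G} for exact 1-forms. -/

import Mathlib

open Finset

/-- An abstract model of the ring `𝒜` of differential polynomials in the formal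
variables `u^i_{(s)}` (`i = 1,…,n`, `s ≥ 0`, `u^i_{(0)} = u^i`): a commutative
`ℝ`-algebra `A` equipped with the variables `u (i,s)`, the partial derivatives
`pd (i,s) = ∂/∂u^i_{(s)}` (commuting `ℝ`-linear derivations with
`∂u^j_{(t)}/∂u^i_{(s)} = δ`), a finiteness witness `supp f` (each `f` depends on
finitely many of the variables), and the total `x`-derivative
`∂_x f = Σ_{i,s} u^i_{(s+1)} ∂f/∂u^i_{(s)}` (a finite sum on each `f`). -/
structure DiffPolyAlg (n : ℕ) (A : Type*) [CommRing A] [Algebra ℝ A] where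
  u : Fin n × ℕ → A
  pd : Fin n × ℕ → A → A
  pd_add : ∀ v f g, pd v (f + g) = pd v f + pd v g
  pd_smul : ∀ v (r : ℝ) f, pd v (r • f) = r • pd v f
  pd_mul : ∀ v f g, pd v (f * g) = pd v f * g + f * pd v g
  pd_u : ∀ v w, pd v (u w) = if v = w then 1 else 0
  pd_comm : ∀ v w f, pd v (pd w f) = pd w (pd v f)
  supp : A → Finset (Fin n × ℕ)
  pd_eq_zero : ∀ f v, v ∉ supp f → pd v f = 0
  Dx : A → A
  Dx_add : ∀ f g, Dx (f + g) = Dx f + Dx g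
  Dx_smul : ∀ (r : ℝ) f, Dx (r • f) = r • Dx f
  Dx_mul : ∀ f g, Dx (f * g) = Dx f * g + f * Dx g
  Dx_spec : ∀ f, ∀ S : Finset (Fin n × ℕ), supp f ⊆ S →
      Dx f = ∑ v ∈ S, u (v.1, v.2 + 1) * pd v f

namespace DiffPolyAlg

variable {n : ℕ} {A : Type*} [CommRing A] [Algebra ℝ A]

/-- The finite set of orders `s` such that `∂f/∂u^i_{(s)}` can be nonzero;
sums `Σ_s` below are taken over this set. -/
def sset (D : DiffPolyAlg n A) (f : A) (i : Fin n) : Finset ℕ :=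
  ((D.supp f).filter fun v => v.1 = i).image Prod.snd

/-- The components `{α,β}_i = Σ_{k,l,s} η^{kl} [ (∂_x^{s+1}β_l)(∂α_i/∂u^k_{(s)})
− (∂_x^{s+1}α_l)(∂β_i/∂u^k_{(s)}) ]` of the Poisson bracket of two reduced
1-forms in flat coordinates (the sum over the pairs `(k,s)` is restricted to the
finite set where the partial derivatives can be nonzero). -/
def pbracket (D : DiffPolyAlg n A) (η : Fin n → Fin n → ℝ)
    (α β : Fin n → A) : Fin n → A := fun i =>
  (∑ v ∈ D.supp (α i), ∑ l, η v.1 l • (D.Dx^[v.2 + 1] (β l) * D.pd v (α i)))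
    - ∑ v ∈ D.supp (β i), ∑ l, η v.1 l • (D.Dx^[v.2 + 1] (α l) * D.pd v (β i))

end DiffPolyAlg

namespace DiffPolyAlg

variable {n : ℕ} {A : Type*} [CommRing A] [Algebra ℝ A]

/-- The variational derivative `δf/δu^i = Σ_t (−1)^t ∂_x^t(∂f/∂u^i_{(t)})`
(the sum over `t` is restricted to the finite set where `∂f/∂u^i_{(t)}` can be
nonzero). -/
def varDer (D : DiffPolyAlg n A) (f : A) (i : Fin n) : A :=
  ∑ t ∈ insert 0 (D.sset f i), ((-1 : ℝ) ^ t) • D.Dx^[t] (D.pd (i, t) f)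

end DiffPolyAlg


namespace DiffPolyAlg

variable {n : ℕ} {A : Type*} [CommRing A] [Algebra ℝ A] (D : DiffPolyAlg n A)

/-! ### Linearity infrastructure -/

/-- `pd v` bundled as an `ℝ`-linear map. -/
def pdL (v : Fin n × ℕ) : A →ₗ[ℝ] A where
  toFun := D.pd v
  map_add' := D.pd_add v
  map_smul' r f := D.pd_smul v r f

/-- `Dx` bundled as an `ℝ`-linear map. -/
def DxL : A →ₗ[ℝ] A where
  toFun := D.Dx
  map_add' := D.Dx_add
  map_smul' := D.Dx_smul

lemma pd_zero (v : Fin n × ℕ) : D.pd v (0 : A) = 0 := map_zero (D.pdL v)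

lemma Dx_zero : D.Dx (0 : A) = 0 := map_zero D.DxL

lemma pd_sum {ι : Type*} (v : Fin n × ℕ) (s : Finset ι) (F : ι → A) :
    D.pd v (∑ x ∈ s, F x) = ∑ x ∈ s, D.pd v (F x) := map_sum (D.pdL v) F s

lemma Dx_sum {ι : Type*} (s : Finset ι) (F : ι → A) :
    D.Dx (∑ x ∈ s, F x) = ∑ x ∈ s, D.Dx (F x) := map_sum D.DxL F s

lemma DxI_zero (m : ℕ) : D.Dx^[m] (0 : A) = 0 := by
  induction m with
  | zero => rfl
  | succ m ih => rw [Function.iterate_succ_apply', ih, D.Dx_zero]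

lemma DxI_add (m : ℕ) (f g : A) : D.Dx^[m] (f + g) = D.Dx^[m] f + D.Dx^[m] g := by
  induction m with
  | zero => rfl
  | succ m ih => rw [Function.iterate_succ_apply', ih, D.Dx_add,
      Function.iterate_succ_apply', Function.iterate_succ_apply']

lemma DxI_smul (m : ℕ) (r : ℝ) (f : A) : D.Dx^[m] (r • f) = r • D.Dx^[m] f := by
  induction m with
  | zero => rfl
  | succ m ih => rw [Function.iterate_succ_apply', ih, D.Dx_smul,
      Function.iterate_succ_apply']

lemma DxI_sum {ι : Type*} (m : ℕ) (s : Finset ι) (F : ι → A) :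
    D.Dx^[m] (∑ x ∈ s, F x) = ∑ x ∈ s, D.Dx^[m] (F x) := by
  induction m with
  | zero => rfl
  | succ m ih => simp only [Function.iterate_succ_apply', ih, D.Dx_sum]


lemma DxI_succ' (m : ℕ) (x : A) : D.Dx (D.Dx^[m] x) = D.Dx^[m + 1] x :=
  (Function.iterate_succ_apply' _ _ _).symm

/-! ### Commutators of `pd` with `Dx` -/

lemma pd_Dx_zero' (i : Fin n) (f : A) :
    D.pd (i, 0) (D.Dx f) = D.Dx (D.pd (i, 0) f) := by
  set S : Finset (Fin n × ℕ) := D.supp f ∪ D.supp (D.pd (i, 0) f) with hS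
  have h1 : D.Dx f = ∑ v ∈ S, D.u (v.1, v.2 + 1) * D.pd v f :=
    D.Dx_spec f S (Finset.subset_union_left)
  have h2 : D.Dx (D.pd (i, 0) f) = ∑ v ∈ S, D.u (v.1, v.2 + 1) * D.pd v (D.pd (i, 0) f) :=
    D.Dx_spec _ S (Finset.subset_union_right)
  rw [h1, D.pd_sum, h2]
  refine Finset.sum_congr rfl fun v _ => ?_
  rw [D.pd_mul, D.pd_u, D.pd_comm]
  have : ((i, 0) : Fin n × ℕ) ≠ (v.1, v.2 + 1) := by
    intro h; exact Nat.succ_ne_zero v.2 (congrArg Prod.snd h).symm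
  rw [if_neg this, zero_mul, zero_add]

lemma pd_Dx_succ (i : Fin n) (t : ℕ) (f : A) :
    D.pd (i, t + 1) (D.Dx f) = D.Dx (D.pd (i, t + 1) f) + D.pd (i, t) f := by
  set S : Finset (Fin n × ℕ) :=
    insert (i, t) (D.supp f ∪ D.supp (D.pd (i, t + 1) f)) with hS
  have h1 : D.Dx f = ∑ v ∈ S, D.u (v.1, v.2 + 1) * D.pd v f :=
    D.Dx_spec f S (Finset.Subset.trans Finset.subset_union_left
      (Finset.subset_insert _ _))
  have h2 : D.Dx (D.pd (i, t + 1) f)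
      = ∑ v ∈ S, D.u (v.1, v.2 + 1) * D.pd v (D.pd (i, t + 1) f) :=
    D.Dx_spec _ S (Finset.Subset.trans Finset.subset_union_right
      (Finset.subset_insert _ _))
  rw [h1, D.pd_sum]
  have key : ∀ v ∈ S, D.pd (i, t + 1) (D.u (v.1, v.2 + 1) * D.pd v f)
      = D.u (v.1, v.2 + 1) * D.pd v (D.pd (i, t + 1) f)
        + (if v = (i, t) then D.pd (i, t) f else 0) := by
    intro v _
    rw [D.pd_mul, D.pd_u, D.pd_comm]
    have hco : ((i, t + 1) = ((v.1, v.2 + 1) : Fin n × ℕ)) ↔ v = (i, t) := by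
      constructor
      · intro h
        have h1 := congrArg Prod.fst h
        have h2 := congrArg Prod.snd h
        simp only at h1 h2
        exact Prod.ext h1.symm (Nat.succ_injective h2).symm
      · rintro rfl; rfl
    by_cases hv : v = (i, t)
    · rw [if_pos (hco.mpr hv), if_pos hv, one_mul, add_comm]
      subst hv; rfl
    · rw [if_neg (fun h => hv (hco.mp h)), if_neg hv, zero_mul, zero_add, add_zero]
  rw [Finset.sum_congr rfl key, Finset.sum_add_distrib, ← h2,
    Finset.sum_ite_eq' S ((i, t) : Fin n × ℕ) (fun _ => D.pd (i, t) f),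
    if_pos (Finset.mem_insert_self _ _)]

/-- `ℤ`-indexed partial derivative: `pdz i s f = ∂f/∂u^i_{(s)}` for `s ≥ 0`, `0` else. -/
def pdz (i : Fin n) (s : ℤ) (f : A) : A := if 0 ≤ s then D.pd (i, s.toNat) f else 0

lemma pdz_natCast (i : Fin n) (s : ℕ) (f : A) : D.pdz i (s : ℤ) f = D.pd (i, s) f := by
  simp [pdz]

lemma pdz_neg {s : ℤ} (hs : s < 0) (i : Fin n) (f : A) : D.pdz i s f = 0 := by
  simp [pdz, not_le.mpr hs]

lemma pdz_zero (i : Fin n) (s : ℤ) : D.pdz i s (0 : A) = 0 := by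
  unfold pdz; split <;> simp [D.pd_zero]

lemma pdz_Dx (i : Fin n) (s : ℤ) (f : A) :
    D.pdz i s (D.Dx f) = D.Dx (D.pdz i s f) + D.pdz i (s - 1) f := by
  rcases lt_trichotomy s 0 with hs | hs | hs
  · rw [D.pdz_neg hs, D.pdz_neg hs, D.pdz_neg (by omega : s - 1 < 0), D.Dx_zero, add_zero]
  · subst hs
    rw [D.pdz_neg (by omega : (0 : ℤ) - 1 < 0), add_zero]
    show D.pdz i ((0 : ℕ) : ℤ) (D.Dx f) = D.Dx (D.pdz i ((0 : ℕ) : ℤ) f)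
    rw [D.pdz_natCast, D.pdz_natCast, D.pd_Dx_zero']
  · obtain ⟨t, rfl⟩ : ∃ t : ℕ, s = ((t + 1 : ℕ) : ℤ) := by
      refine ⟨(s - 1).toNat, by omega⟩
    have h1 : ((t + 1 : ℕ) : ℤ) - 1 = ((t : ℕ) : ℤ) := by push_cast; ring
    rw [h1, D.pdz_natCast, D.pdz_natCast, D.pdz_natCast, D.pd_Dx_succ]

/-- Pascal-type splitting of a binomially weighted sum. -/
lemma choose_sum_split {M : Type*} [AddCommGroup M] [Module ℝ M] (m : ℕ) (T : ℕ → M) :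
    ∑ j ∈ Finset.range (m + 2), ((m + 1).choose j : ℝ) • T j
      = ∑ j ∈ Finset.range (m + 1), (m.choose j : ℝ) • T j
        + ∑ j ∈ Finset.range (m + 1), (m.choose j : ℝ) • T (j + 1) := by
  have e1 : ∑ j ∈ Finset.range (m + 2), ((m + 1).choose j : ℝ) • T j
      = (∑ j ∈ Finset.range (m + 1), ((m + 1).choose (j + 1) : ℝ) • T (j + 1))
        + ((m + 1).choose 0 : ℝ) • T 0 :=
    Finset.sum_range_succ' (fun j => ((m + 1).choose j : ℝ) • T j) (m + 1)
  have e2 : ∀ j, (((m + 1).choose (j + 1) : ℝ)) • T (j + 1)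
      = (m.choose j : ℝ) • T (j + 1) + (m.choose (j + 1) : ℝ) • T (j + 1) := by
    intro j; rw [Nat.choose_succ_succ, Nat.cast_add, add_smul]
  have e3 : ∑ j ∈ Finset.range (m + 1), (m.choose (j + 1) : ℝ) • T (j + 1)
      = ∑ j ∈ Finset.range m, (m.choose (j + 1) : ℝ) • T (j + 1) := by
    rw [Finset.sum_range_succ]; simp [Nat.choose_succ_self]
  have e4 : ∑ j ∈ Finset.range (m + 1), (m.choose j : ℝ) • T j
      = (∑ j ∈ Finset.range m, (m.choose (j + 1) : ℝ) • T (j + 1))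
        + (m.choose 0 : ℝ) • T 0 :=
    Finset.sum_range_succ' (fun j => (m.choose j : ℝ) • T j) m
  rw [e1]
  simp only [e2]
  rw [Finset.sum_add_distrib, e3, e4]
  simp only [Nat.choose_zero_right, Nat.cast_one, one_smul]
  abel

/-- Iterated commutator: `pd (i,s) ∘ Dx^m` expanded binomially. -/
lemma pdz_DxI (i : Fin n) (m : ℕ) (s : ℤ) (f : A) :
    D.pdz i s (D.Dx^[m] f)
      = ∑ j ∈ Finset.range (m + 1), (m.choose j : ℝ) • D.Dx^[m - j] (D.pdz i (s - j) f) := by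
  induction m generalizing s with
  | zero => simp
  | succ m ih =>
    have e0 : D.Dx^[m + 1] f = D.Dx (D.Dx^[m] f) := Function.iterate_succ_apply' _ _ _
    rw [e0, D.pdz_Dx, ih s, ih (s - 1), D.Dx_sum]
    have step1 : ∀ j ∈ Finset.range (m + 1),
        D.Dx ((m.choose j : ℝ) • D.Dx^[m - j] (D.pdz i (s - j) f))
          = (m.choose j : ℝ) • D.Dx^[m + 1 - j] (D.pdz i (s - (j : ℕ)) f) := by
      intro j hj
      simp only [Finset.mem_range] at hj
      rw [D.Dx_smul, D.DxI_succ']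
      have : m - j + 1 = m + 1 - j := by omega
      rw [this]
    have step2 : ∀ j ∈ Finset.range (m + 1),
        (m.choose j : ℝ) • D.Dx^[m - j] (D.pdz i (s - 1 - j) f)
          = (m.choose j : ℝ) • D.Dx^[m + 1 - (j + 1)] (D.pdz i (s - ((j + 1 : ℕ) : ℤ)) f) := by
      intro j hj
      have h1 : m - j = m + 1 - (j + 1) := by omega
      have h2 : s - 1 - (j : ℕ) = s - ((j + 1 : ℕ) : ℤ) := by push_cast; ring
      rw [h1, h2]
    rw [Finset.sum_congr rfl step1, Finset.sum_congr rfl step2]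
    exact (choose_sum_split m (fun j => D.Dx^[m + 1 - j] (D.pdz i (s - j) f))).symm

/-- Leibniz rule for iterated `Dx`. -/
lemma DxI_mul (m : ℕ) (x y : A) :
    D.Dx^[m] (x * y)
      = ∑ j ∈ Finset.range (m + 1), (m.choose j : ℝ) • (D.Dx^[j] x * D.Dx^[m - j] y) := by
  induction m with
  | zero => simp
  | succ m ih =>
    rw [Function.iterate_succ_apply', ih, D.Dx_sum]
    have step : ∀ j ∈ Finset.range (m + 1),
        D.Dx ((m.choose j : ℝ) • (D.Dx^[j] x * D.Dx^[m - j] y))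
          = (m.choose j : ℝ) • (D.Dx^[j] x * D.Dx^[m + 1 - j] y)
            + (m.choose j : ℝ) • (D.Dx^[j + 1] x * D.Dx^[m + 1 - (j + 1)] y) := by
      intro j hj
      simp only [Finset.mem_range] at hj
      rw [D.Dx_smul, D.Dx_mul, D.DxI_succ', D.DxI_succ', smul_add]
      have h1 : m - j + 1 = m + 1 - j := by omega
      have h2 : m - j = m + 1 - (j + 1) := by omega
      rw [h1, ← h2, add_comm]
    rw [Finset.sum_congr rfl step, Finset.sum_add_distrib, choose_sum_split m
      (fun j => D.Dx^[j] x * D.Dx^[m + 1 - j] y)]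

/-! ### Vanishing order -/

/-- `Van N f` means all partials of order `≥ N` kill `f`. -/
def Van (N : ℕ) (f : A) : Prop := ∀ (i : Fin n) (s : ℕ), N ≤ s → D.pd (i, s) f = 0

lemma van_mono {N M : ℕ} {f : A} (h : D.Van N f) (hNM : N ≤ M) : D.Van M f :=
  fun i s hs => h i s (le_trans hNM hs)

lemma van_zero (N : ℕ) : D.Van N (0 : A) := fun i s _ => D.pd_zero _

lemma van_add {N : ℕ} {f g : A} (hf : D.Van N f) (hg : D.Van N g) : D.Van N (f + g) :=
  fun i s hs => by rw [D.pd_add, hf i s hs, hg i s hs, add_zero]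

lemma van_smul {N : ℕ} {f : A} (r : ℝ) (hf : D.Van N f) : D.Van N (r • f) :=
  fun i s hs => by rw [D.pd_smul, hf i s hs, smul_zero]

lemma van_sum {ι : Type*} {N : ℕ} {t : Finset ι} {F : ι → A}
    (h : ∀ x ∈ t, D.Van N (F x)) : D.Van N (∑ x ∈ t, F x) := fun i s hs => by
  rw [D.pd_sum]
  exact Finset.sum_eq_zero fun x hx => h x hx i s hs

lemma van_mul {N : ℕ} {f g : A} (hf : D.Van N f) (hg : D.Van N g) : D.Van N (f * g) :=
  fun i s hs => by
    rw [D.pd_mul, hf i s hs, hg i s hs, zero_mul, mul_zero, add_zero]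

lemma van_pd {N : ℕ} {f : A} (hf : D.Van N f) (v : Fin n × ℕ) : D.Van N (D.pd v f) :=
  fun i s hs => by rw [D.pd_comm, hf i s hs, D.pd_zero]

lemma van_Dx {N : ℕ} {f : A} (hf : D.Van N f) : D.Van (N + 1) (D.Dx f) := by
  intro i s hs
  obtain ⟨t, rfl⟩ : ∃ t, s = t + 1 := ⟨s - 1, by omega⟩
  rw [D.pd_Dx_succ, hf i (t + 1) (by omega), hf i t (by omega), D.Dx_zero, add_zero]

lemma van_DxI {N : ℕ} {f : A} (hf : D.Van N f) (m : ℕ) : D.Van (N + m) (D.Dx^[m] f) := by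
  induction m with
  | zero => exact hf
  | succ m ih =>
    rw [Function.iterate_succ_apply']
    exact D.van_mono (D.van_Dx ih) (by omega)

lemma mem_sset {f : A} {i : Fin n} {t : ℕ} : t ∈ D.sset f i ↔ ((i, t) : Fin n × ℕ) ∈ D.supp f := by
  unfold sset
  simp only [Finset.mem_image, Finset.mem_filter]
  constructor
  · rintro ⟨v, ⟨hv, h1⟩, h2⟩
    have : v = (i, t) := Prod.ext h1 h2
    rwa [this] at hv
  · intro h
    exact ⟨(i, t), ⟨h, rfl⟩, rfl⟩

lemma van_exists (f : A) : ∃ N : ℕ, 0 < N ∧ D.Van N f ∧ ∀ i, D.sset f i ⊆ Finset.range N := by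
  refine ⟨(D.supp f).sup Prod.snd + 1, Nat.succ_pos _, ?_, ?_⟩
  · intro i s hs
    apply D.pd_eq_zero
    intro hmem
    have : s ≤ (D.supp f).sup Prod.snd := Finset.le_sup (f := Prod.snd) hmem
    omega
  · intro i t ht
    have : ((i, t) : Fin n × ℕ) ∈ D.supp f := D.mem_sset.mp ht
    have := Finset.le_sup (f := Prod.snd) this
    simp only [Finset.mem_range]
    omega

lemma van_varDer {N : ℕ} {f : A} (hf : D.Van N f) (i : Fin n) :
    D.Van (2 * N) (D.varDer f i) := by
  unfold varDer
  refine D.van_sum fun t _ => ?_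
  by_cases ht : t < N
  · refine D.van_smul _ (D.van_mono (D.van_DxI (D.van_pd hf (i, t)) t) (by omega))
  · have : D.pd (i, t) f = 0 := hf i t (by omega)
    rw [this, D.DxI_zero, smul_zero]
    exact D.van_zero _

/-! ### Normal (range) forms of the basic objects -/

lemma varDer_eq {M : ℕ} {f : A} (h : D.Van M f) (hM : 0 < M) (i : Fin n) :
    D.varDer f i = ∑ t ∈ Finset.range M, ((-1 : ℝ) ^ t) • D.Dx^[t] (D.pd (i, t) f) := by
  unfold varDer
  have h1 : ∑ t ∈ insert 0 (D.sset f i), ((-1 : ℝ) ^ t) • D.Dx^[t] (D.pd (i, t) f)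
      = ∑ t ∈ insert 0 (D.sset f i) ∪ Finset.range M,
          ((-1 : ℝ) ^ t) • D.Dx^[t] (D.pd (i, t) f) := by
    refine Finset.sum_subset Finset.subset_union_left fun t _ ht => ?_
    have h2 : t ∉ D.sset f i := fun hc => ht (Finset.mem_insert_of_mem hc)
    have h3 : D.pd (i, t) f = 0 := D.pd_eq_zero f (i, t) (fun hc => h2 (D.mem_sset.mpr hc))
    rw [h3, D.DxI_zero, smul_zero]
  have h2 : ∑ t ∈ Finset.range M, ((-1 : ℝ) ^ t) • D.Dx^[t] (D.pd (i, t) f)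
      = ∑ t ∈ insert 0 (D.sset f i) ∪ Finset.range M,
          ((-1 : ℝ) ^ t) • D.Dx^[t] (D.pd (i, t) f) := by
    refine Finset.sum_subset Finset.subset_union_right fun t _ ht => ?_
    have h3 : M ≤ t := by
      by_contra hc
      exact ht (Finset.mem_range.mpr (by omega))
    rw [h i t h3, D.DxI_zero, smul_zero]
  rw [h1, h2]

lemma sum_supp_mul_pd (c : A) {M : ℕ} (h : D.Van M c) (G : Fin n × ℕ → A) :
    ∑ v ∈ D.supp c, G v * D.pd v c
      = ∑ k : Fin n, ∑ s ∈ Finset.range M, G (k, s) * D.pd (k, s) c := by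
  have h1 : ∑ v ∈ D.supp c, G v * D.pd v c
      = ∑ v ∈ D.supp c ∪ Finset.univ ×ˢ Finset.range M, G v * D.pd v c := by
    refine Finset.sum_subset Finset.subset_union_left fun v _ hv => ?_
    rw [D.pd_eq_zero c v hv, mul_zero]
  have h2 : ∑ v ∈ Finset.univ ×ˢ Finset.range M, G v * D.pd v c
      = ∑ v ∈ D.supp c ∪ Finset.univ ×ˢ Finset.range M, G v * D.pd v c := by
    refine Finset.sum_subset Finset.subset_union_right fun v _ hv => ?_
    have h3 : M ≤ v.2 := by
      by_contra hc
      exact hv (Finset.mem_product.mpr ⟨Finset.mem_univ _, Finset.mem_range.mpr (by omega)⟩)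
    rw [h v.1 v.2 h3, mul_zero]
  rw [h1, ← h2, Finset.sum_product]

lemma pbracket_eq (η : Fin n → Fin n → ℝ) (α β : Fin n → A) (i : Fin n) {M : ℕ}
    (hα : D.Van M (α i)) (hβ : D.Van M (β i)) :
    D.pbracket η α β i
      = (∑ k : Fin n, ∑ s ∈ Finset.range M, ∑ l,
          η k l • (D.Dx^[s + 1] (β l) * D.pd (k, s) (α i)))
        - ∑ k : Fin n, ∑ s ∈ Finset.range M, ∑ l,
          η k l • (D.Dx^[s + 1] (α l) * D.pd (k, s) (β i)) := by
  unfold pbracket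
  have key : ∀ (γ δ : Fin n → A), D.Van M (γ i) →
      ∑ v ∈ D.supp (γ i), ∑ l, η v.1 l • (D.Dx^[v.2 + 1] (δ l) * D.pd v (γ i))
        = ∑ k : Fin n, ∑ s ∈ Finset.range M, ∑ l,
            η k l • (D.Dx^[s + 1] (δ l) * D.pd (k, s) (γ i)) := by
    intro γ δ hγ
    have e : ∀ (v : Fin n × ℕ),
        (∑ l, η v.1 l • (D.Dx^[v.2 + 1] (δ l) * D.pd v (γ i)))
          = (∑ l, η v.1 l • D.Dx^[v.2 + 1] (δ l)) * D.pd v (γ i) := by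
      intro v
      rw [Finset.sum_mul]
      exact Finset.sum_congr rfl fun l _ => (smul_mul_assoc _ _ _).symm
    simp only [e]
    rw [D.sum_supp_mul_pd (γ i) hγ (fun v => ∑ l, η v.1 l • D.Dx^[v.2 + 1] (δ l))]
    refine Finset.sum_congr rfl fun k _ => Finset.sum_congr rfl fun s _ => ?_
    rw [Finset.sum_mul]
    exact Finset.sum_congr rfl fun l _ => smul_mul_assoc _ _ _
  rw [key α β hα, key β α hβ]

lemma Dx_eq_range {M : ℕ} {f : A} (h : D.Van M f) :
    D.Dx f = ∑ k : Fin n, ∑ s ∈ Finset.range M, D.u (k, s + 1) * D.pd (k, s) f := by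
  rw [D.Dx_spec f (D.supp f) (Finset.Subset.refl _)]
  exact D.sum_supp_mul_pd f h (fun v => D.u (v.1, v.2 + 1))

/-! ### Summation helpers and the key binomial identity -/

lemma sum_range_shift {β : Type*} [AddCommMonoid β] (F : ℕ → β) (j M : ℕ) (hj : j ≤ M)
    (h0 : ∀ s, s < j → F s = 0) :
    ∑ s ∈ Finset.range M, F s = ∑ a ∈ Finset.range (M - j), F (j + a) := by
  rw [Finset.range_eq_Ico, ← Finset.sum_Ico_consecutive F (Nat.zero_le j) hj]
  have h1 : ∑ s ∈ Finset.Ico 0 j, F s = 0 :=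
    Finset.sum_eq_zero fun s hs => h0 s (Finset.mem_Ico.mp hs).2
  rw [h1, zero_add, Finset.sum_Ico_eq_sum_range]

lemma sum_range_truncate {β : Type*} [AddCommMonoid β] (F : ℕ → β) {N M : ℕ} (hNM : N ≤ M)
    (h1 : ∀ a, N ≤ a → F a = 0) :
    ∑ a ∈ Finset.range M, F a = ∑ a ∈ Finset.range N, F a :=
  (Finset.sum_subset (Finset.range_subset_range.mpr hNM) fun a _ ha =>
    h1 a (by simpa using (Finset.mem_range.not.mp ha))).symm

lemma sum_shift_trunc {β : Type*} [AddCommMonoid β] (F : ℕ → β) {j N M : ℕ}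
    (hjN : j < N) (hM : 2 * N ≤ M)
    (h0 : ∀ s, s < j → F s = 0) (h1 : ∀ a, N ≤ a → F (j + a) = 0) :
    ∑ s ∈ Finset.range M, F s = ∑ a ∈ Finset.range N, F (j + a) := by
  rw [sum_range_shift F j M (by omega) h0]
  exact sum_range_truncate (fun a => F (j + a)) (by omega : N ≤ M - j) h1

/-- The key binomial identity
`Σ_j (−1)^j C(b,j) C(a+j,m) = (−1)^b C(a, m−b)` (zero if `m < b`). -/
lemma key_binomial : ∀ (b a m : ℕ),
    ∑ j ∈ Finset.range (b + 1),
        ((b.choose j : ℝ)) • ((-1 : ℝ) ^ j * (((a + j).choose m : ℕ) : ℝ))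
      = (-1 : ℝ) ^ b * (if b ≤ m then ((a.choose (m - b) : ℕ) : ℝ) else 0) := by
  intro b
  induction b with
  | zero => intro a m; simp
  | succ b ih =>
    intro a m
    have split := choose_sum_split (M := ℝ) b
      (fun j => (-1 : ℝ) ^ j * (((a + j).choose m : ℕ) : ℝ))
    rw [show b + 1 + 1 = b + 2 from rfl, split, ih a m]
    have e2 : ∑ j ∈ Finset.range (b + 1),
        (b.choose j : ℝ) • ((-1 : ℝ) ^ (j + 1) * (((a + (j + 1)).choose m : ℕ) : ℝ))
        = - ∑ j ∈ Finset.range (b + 1),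
            (b.choose j : ℝ) • ((-1 : ℝ) ^ j * (((a + 1 + j).choose m : ℕ) : ℝ)) := by
      rw [← Finset.sum_neg_distrib]
      refine Finset.sum_congr rfl fun j _ => ?_
      have : a + (j + 1) = a + 1 + j := by omega
      rw [this, pow_succ, smul_eq_mul, smul_eq_mul]
      ring
    rw [e2, ih (a + 1) m]
    by_cases h1 : b + 1 ≤ m
    · rw [if_pos (by omega : b ≤ m), if_pos (by omega : b ≤ m), if_pos h1]
      have h2 : m - b = (m - (b + 1)) + 1 := by omega
      have h3 : (a + 1).choose (m - b) = a.choose (m - (b + 1)) + a.choose (m - b) := by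
        rw [h2]
        exact Nat.choose_succ_succ a (m - (b + 1))
      rw [h3]
      push_cast
      ring
    · by_cases h4 : b ≤ m
      · have h5 : m = b := by omega
        subst h5
        rw [if_pos le_rfl, if_pos le_rfl, if_neg h1]
        simp [Nat.sub_self]
      · rw [if_neg h4, if_neg h4, if_neg h1]
        ring

/-! ### Expansion of partials of variational derivatives -/

lemma pd_varDer_expand {N : ℕ} {f : A} (hf : D.Van N f) (hN : 0 < N) (i k : Fin n) (s : ℕ) :
    D.pd (i, s) (D.varDer f k)
      = ∑ t ∈ Finset.range N, ∑ j ∈ Finset.range (t + 1),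
          ((-1 : ℝ) ^ t * (t.choose j : ℝ))
            • D.Dx^[t - j] (D.pdz i ((s : ℤ) - j) (D.pd (k, t) f)) := by
  rw [D.varDer_eq hf hN k, D.pd_sum]
  refine Finset.sum_congr rfl fun t _ => ?_
  rw [D.pd_smul,
    show D.pd (i, s) (D.Dx^[t] (D.pd (k, t) f))
        = D.pdz i ((s : ℕ) : ℤ) (D.Dx^[t] (D.pd (k, t) f)) from (D.pdz_natCast i s _).symm,
    D.pdz_DxI, Finset.smul_sum]
  refine Finset.sum_congr rfl fun j _ => ?_
  rw [smul_smul]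

lemma key_binomial' (t a m : ℕ) :
    ∑ j ∈ Finset.range (t + 1),
        ((-1 : ℝ) ^ (j + a) * ((-1 : ℝ) ^ t * (t.choose j : ℝ))
          * (((j + a).choose m : ℕ) : ℝ))
      = (-1 : ℝ) ^ a * (if t ≤ m then ((a.choose (m - t) : ℕ) : ℝ) else 0) := by
  have e : ∀ j, (-1 : ℝ) ^ (j + a) * ((-1 : ℝ) ^ t * (t.choose j : ℝ))
        * (((j + a).choose m : ℕ) : ℝ)
      = ((-1 : ℝ) ^ a * (-1 : ℝ) ^ t)
        * ((t.choose j : ℝ) • ((-1 : ℝ) ^ j * (((a + j).choose m : ℕ) : ℝ))) := by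
    intro j
    rw [smul_eq_mul, pow_add, Nat.add_comm j a]
    ring
  rw [Finset.sum_congr rfl fun j _ => e j, ← Finset.mul_sum, key_binomial t a m]
  have h11 : (-1 : ℝ) ^ t * (-1 : ℝ) ^ t = 1 := by
    rw [← pow_add]
    exact Even.neg_one_pow ⟨t, rfl⟩
  rw [show ((-1 : ℝ) ^ a * (-1 : ℝ) ^ t)
        * ((-1 : ℝ) ^ t * (if t ≤ m then ((a.choose (m - t) : ℕ) : ℝ) else 0))
      = (-1 : ℝ) ^ a * (((-1 : ℝ) ^ t * (-1 : ℝ) ^ t)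
        * (if t ≤ m then ((a.choose (m - t) : ℕ) : ℝ) else 0)) from by ring, h11, one_mul]

/-! ### The Helmholtz self-adjointness identity -/

lemma claimL {N M : ℕ} {f : A} (hf : D.Van N f) (hN : 0 < N) (hM : 2 * N ≤ M)
    (i k : Fin n) (X : A) :
    ∑ s ∈ Finset.range M, ((-1 : ℝ) ^ s) • D.Dx^[s] (D.pd (i, s) (D.varDer f k) * X)
      = ∑ b ∈ Finset.range N, ∑ a ∈ Finset.range N, ∑ m ∈ Finset.range (a + b + 1),
          ((-1 : ℝ) ^ a * (if b ≤ m then ((a.choose (m - b) : ℕ) : ℝ) else 0))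
            • (D.Dx^[m] X * D.Dx^[a + b - m] (D.pd (i, a) (D.pd (k, b) f))) := by
  calc
    ∑ s ∈ Finset.range M, ((-1 : ℝ) ^ s) • D.Dx^[s] (D.pd (i, s) (D.varDer f k) * X)
      = ∑ s ∈ Finset.range M, ∑ t ∈ Finset.range N, ∑ j ∈ Finset.range (t + 1),
          ((-1 : ℝ) ^ s * ((-1 : ℝ) ^ t * (t.choose j : ℝ)))
            • D.Dx^[s] (D.Dx^[t - j] (D.pdz i ((s : ℤ) - j) (D.pd (k, t) f)) * X) := by
        refine Finset.sum_congr rfl fun s _ => ?_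
        rw [D.pd_varDer_expand hf hN i k s, Finset.sum_mul, D.DxI_sum, Finset.smul_sum]
        refine Finset.sum_congr rfl fun t _ => ?_
        rw [Finset.sum_mul, D.DxI_sum, Finset.smul_sum]
        refine Finset.sum_congr rfl fun j _ => ?_
        rw [smul_mul_assoc, D.DxI_smul, smul_smul]
    _ = ∑ t ∈ Finset.range N, ∑ j ∈ Finset.range (t + 1), ∑ s ∈ Finset.range M,
          ((-1 : ℝ) ^ s * ((-1 : ℝ) ^ t * (t.choose j : ℝ)))
            • D.Dx^[s] (D.Dx^[t - j] (D.pdz i ((s : ℤ) - j) (D.pd (k, t) f)) * X) := by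
        rw [Finset.sum_comm]
        exact Finset.sum_congr rfl fun t _ => Finset.sum_comm
    _ = ∑ t ∈ Finset.range N, ∑ j ∈ Finset.range (t + 1), ∑ a ∈ Finset.range N,
          ((-1 : ℝ) ^ (j + a) * ((-1 : ℝ) ^ t * (t.choose j : ℝ)))
            • D.Dx^[j + a] (D.Dx^[t - j] (D.pd (i, a) (D.pd (k, t) f)) * X) := by
        refine Finset.sum_congr rfl fun t ht => Finset.sum_congr rfl fun j hj => ?_
        simp only [Finset.mem_range] at ht hj
        rw [sum_shift_trunc
          (fun s => ((-1 : ℝ) ^ s * ((-1 : ℝ) ^ t * (t.choose j : ℝ)))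
            • D.Dx^[s] (D.Dx^[t - j] (D.pdz i ((s : ℤ) - j) (D.pd (k, t) f)) * X))
          (by omega : j < N) hM ?_ ?_]
        · refine Finset.sum_congr rfl fun a _ => ?_
          beta_reduce
          have hc : ((j + a : ℕ) : ℤ) - (j : ℕ) = ((a : ℕ) : ℤ) := by push_cast; ring
          rw [hc, D.pdz_natCast]
        · intro s hs
          beta_reduce
          rw [D.pdz_neg (by omega : (s : ℤ) - (j : ℕ) < 0), D.DxI_zero, zero_mul,
            D.DxI_zero, smul_zero]
        · intro a ha
          beta_reduce
          have hc : ((j + a : ℕ) : ℤ) - (j : ℕ) = ((a : ℕ) : ℤ) := by push_cast; ring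
          rw [hc, D.pdz_natCast, D.van_pd hf (k, t) i a ha, D.DxI_zero, zero_mul,
            D.DxI_zero, smul_zero]
    _ = ∑ t ∈ Finset.range N, ∑ j ∈ Finset.range (t + 1), ∑ a ∈ Finset.range N,
          ∑ m ∈ Finset.range (j + a + 1),
          (((-1 : ℝ) ^ (j + a) * ((-1 : ℝ) ^ t * (t.choose j : ℝ)))
              * (((j + a).choose m : ℕ) : ℝ))
            • (D.Dx^[m] X * D.Dx^[a + t - m] (D.pd (i, a) (D.pd (k, t) f))) := by
        refine Finset.sum_congr rfl fun t ht => Finset.sum_congr rfl fun j hj =>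
          Finset.sum_congr rfl fun a ha => ?_
        simp only [Finset.mem_range] at ht hj ha
        rw [mul_comm (D.Dx^[t - j] (D.pd (i, a) (D.pd (k, t) f))) X,
          D.DxI_mul (j + a) X (D.Dx^[t - j] (D.pd (i, a) (D.pd (k, t) f))),
          Finset.smul_sum]
        refine Finset.sum_congr rfl fun m hm => ?_
        simp only [Finset.mem_range] at hm
        rw [smul_smul, ← Function.iterate_add_apply D.Dx (j + a - m) (t - j),
          show j + a - m + (t - j) = a + t - m from by omega]
    _ = ∑ t ∈ Finset.range N, ∑ j ∈ Finset.range (t + 1), ∑ a ∈ Finset.range N,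
          ∑ m ∈ Finset.range (a + t + 1),
          (((-1 : ℝ) ^ (j + a) * ((-1 : ℝ) ^ t * (t.choose j : ℝ)))
              * (((j + a).choose m : ℕ) : ℝ))
            • (D.Dx^[m] X * D.Dx^[a + t - m] (D.pd (i, a) (D.pd (k, t) f))) := by
        refine Finset.sum_congr rfl fun t ht => Finset.sum_congr rfl fun j hj =>
          Finset.sum_congr rfl fun a ha => ?_
        simp only [Finset.mem_range] at ht hj ha
        refine Finset.sum_subset (Finset.range_subset_range.mpr (by omega)) fun m _ hm => ?_
        have hlt : j + a < m := by
          simp only [Finset.mem_range, not_lt] at hm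
          omega
        rw [Nat.choose_eq_zero_of_lt hlt, Nat.cast_zero, mul_zero, zero_smul]
    _ = ∑ t ∈ Finset.range N, ∑ a ∈ Finset.range N, ∑ m ∈ Finset.range (a + t + 1),
          ∑ j ∈ Finset.range (t + 1),
          (((-1 : ℝ) ^ (j + a) * ((-1 : ℝ) ^ t * (t.choose j : ℝ)))
              * (((j + a).choose m : ℕ) : ℝ))
            • (D.Dx^[m] X * D.Dx^[a + t - m] (D.pd (i, a) (D.pd (k, t) f))) := by
        refine Finset.sum_congr rfl fun t _ => ?_
        rw [Finset.sum_comm]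
        exact Finset.sum_congr rfl fun a _ => Finset.sum_comm
    _ = ∑ t ∈ Finset.range N, ∑ a ∈ Finset.range N, ∑ m ∈ Finset.range (a + t + 1),
          ((-1 : ℝ) ^ a * (if t ≤ m then ((a.choose (m - t) : ℕ) : ℝ) else 0))
            • (D.Dx^[m] X * D.Dx^[a + t - m] (D.pd (i, a) (D.pd (k, t) f))) := by
        refine Finset.sum_congr rfl fun t _ => Finset.sum_congr rfl fun a _ =>
          Finset.sum_congr rfl fun m _ => ?_
        rw [← Finset.sum_smul, key_binomial' t a m]
    _ = ∑ b ∈ Finset.range N, ∑ a ∈ Finset.range N, ∑ m ∈ Finset.range (a + b + 1),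
          ((-1 : ℝ) ^ a * (if b ≤ m then ((a.choose (m - b) : ℕ) : ℝ) else 0))
            • (D.Dx^[m] X * D.Dx^[a + b - m] (D.pd (i, a) (D.pd (k, b) f))) := rfl

lemma claimR {N M : ℕ} {f : A} (hf : D.Van N f) (hN : 0 < N) (hM : 2 * N ≤ M)
    (i k : Fin n) (X : A) :
    ∑ s ∈ Finset.range M, D.pd (k, s) (D.varDer f i) * D.Dx^[s] X
      = ∑ b ∈ Finset.range N, ∑ a ∈ Finset.range N, ∑ m ∈ Finset.range (a + b + 1),
          ((-1 : ℝ) ^ a * (if b ≤ m then ((a.choose (m - b) : ℕ) : ℝ) else 0))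
            • (D.Dx^[m] X * D.Dx^[a + b - m] (D.pd (i, a) (D.pd (k, b) f))) := by
  calc
    ∑ s ∈ Finset.range M, D.pd (k, s) (D.varDer f i) * D.Dx^[s] X
      = ∑ s ∈ Finset.range M, ∑ t ∈ Finset.range N, ∑ j ∈ Finset.range (t + 1),
          ((-1 : ℝ) ^ t * (t.choose j : ℝ))
            • (D.Dx^[t - j] (D.pdz k ((s : ℤ) - j) (D.pd (i, t) f)) * D.Dx^[s] X) := by
        refine Finset.sum_congr rfl fun s _ => ?_
        rw [D.pd_varDer_expand hf hN k i s, Finset.sum_mul]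
        refine Finset.sum_congr rfl fun t _ => ?_
        rw [Finset.sum_mul]
        exact Finset.sum_congr rfl fun j _ => smul_mul_assoc _ _ _
    _ = ∑ t ∈ Finset.range N, ∑ j ∈ Finset.range (t + 1), ∑ s ∈ Finset.range M,
          ((-1 : ℝ) ^ t * (t.choose j : ℝ))
            • (D.Dx^[t - j] (D.pdz k ((s : ℤ) - j) (D.pd (i, t) f)) * D.Dx^[s] X) := by
        rw [Finset.sum_comm]
        exact Finset.sum_congr rfl fun t _ => Finset.sum_comm
    _ = ∑ t ∈ Finset.range N, ∑ j ∈ Finset.range (t + 1), ∑ b ∈ Finset.range N,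
          ((-1 : ℝ) ^ t * (t.choose j : ℝ))
            • (D.Dx^[b + j] X * D.Dx^[t - j] (D.pd (i, t) (D.pd (k, b) f))) := by
        refine Finset.sum_congr rfl fun t ht => Finset.sum_congr rfl fun j hj => ?_
        simp only [Finset.mem_range] at ht hj
        rw [sum_shift_trunc
          (fun s => ((-1 : ℝ) ^ t * (t.choose j : ℝ))
            • (D.Dx^[t - j] (D.pdz k ((s : ℤ) - j) (D.pd (i, t) f)) * D.Dx^[s] X))
          (by omega : j < N) hM ?_ ?_]
        · refine Finset.sum_congr rfl fun b _ => ?_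
          beta_reduce
          have hc : ((j + b : ℕ) : ℤ) - (j : ℕ) = ((b : ℕ) : ℤ) := by push_cast; ring
          rw [hc, D.pdz_natCast, D.pd_comm,
            mul_comm (D.Dx^[t - j] (D.pd (i, t) (D.pd (k, b) f))) (D.Dx^[j + b] X),
            show j + b = b + j from by omega]
        · intro s hs
          beta_reduce
          rw [D.pdz_neg (by omega : (s : ℤ) - (j : ℕ) < 0), D.DxI_zero, zero_mul, smul_zero]
        · intro b hb
          beta_reduce
          have hc : ((j + b : ℕ) : ℤ) - (j : ℕ) = ((b : ℕ) : ℤ) := by push_cast; ring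
          rw [hc, D.pdz_natCast, D.van_pd hf (i, t) k b hb, D.DxI_zero, zero_mul, smul_zero]
    _ = ∑ t ∈ Finset.range N, ∑ b ∈ Finset.range N, ∑ j ∈ Finset.range (t + 1),
          ((-1 : ℝ) ^ t * (t.choose j : ℝ))
            • (D.Dx^[b + j] X * D.Dx^[t - j] (D.pd (i, t) (D.pd (k, b) f))) := by
        exact Finset.sum_congr rfl fun t _ => Finset.sum_comm
    _ = ∑ t ∈ Finset.range N, ∑ b ∈ Finset.range N, ∑ m ∈ Finset.range (t + b + 1),
          ((-1 : ℝ) ^ t * (if b ≤ m then ((t.choose (m - b) : ℕ) : ℝ) else 0))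
            • (D.Dx^[m] X * D.Dx^[t + b - m] (D.pd (i, t) (D.pd (k, b) f))) := by
        refine Finset.sum_congr rfl fun t _ => Finset.sum_congr rfl fun b _ => ?_
        rw [sum_range_shift
          (fun m => ((-1 : ℝ) ^ t * (if b ≤ m then ((t.choose (m - b) : ℕ) : ℝ) else 0))
            • (D.Dx^[m] X * D.Dx^[t + b - m] (D.pd (i, t) (D.pd (k, b) f))))
          b (t + b + 1) (by omega) ?_]
        · rw [show t + b + 1 - b = t + 1 from by omega]
          refine Finset.sum_congr rfl fun j hj => ?_
          simp only [Finset.mem_range] at hj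
          beta_reduce
          rw [if_pos (by omega : b ≤ b + j), show b + j - b = j from by omega,
            show t + b - (b + j) = t - j from by omega]
        · intro m hm
          beta_reduce
          rw [if_neg (by omega : ¬ b ≤ m), mul_zero, zero_smul]
    _ = ∑ b ∈ Finset.range N, ∑ a ∈ Finset.range N, ∑ m ∈ Finset.range (a + b + 1),
          ((-1 : ℝ) ^ a * (if b ≤ m then ((a.choose (m - b) : ℕ) : ℝ) else 0))
            • (D.Dx^[m] X * D.Dx^[a + b - m] (D.pd (i, a) (D.pd (k, b) f))) := by
        exact Finset.sum_comm

/-- **Helmholtz self-adjointness** of the Fréchet derivative of a variational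
derivative: `Σ_s (−∂_x)^s (∂(δf/δu^k)/∂u^i_{(s)} · X) = Σ_s ∂(δf/δu^i)/∂u^k_{(s)} · ∂_x^s X`. -/
lemma helmholtz {N M : ℕ} {f : A} (hf : D.Van N f) (hN : 0 < N) (hM : 2 * N ≤ M)
    (i k : Fin n) (X : A) :
    ∑ s ∈ Finset.range M, ((-1 : ℝ) ^ s) • D.Dx^[s] (D.pd (i, s) (D.varDer f k) * X)
      = ∑ s ∈ Finset.range M, D.pd (k, s) (D.varDer f i) * D.Dx^[s] X :=
  (D.claimL hf hN hM i k X).trans (D.claimR hf hN hM i k X).symm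

/-! ### Telescoping -/

lemma telescope {NQ M : ℕ} (i : Fin n) (P Q : A) (hQ : D.Van NQ Q) (hM : NQ < M) :
    (∑ t ∈ Finset.range M, ((-1 : ℝ) ^ t) • D.Dx^[t] (P * D.Dx (D.pd (i, t) Q)))
      + (∑ t ∈ Finset.range M, ((-1 : ℝ) ^ t) • D.Dx^[t] (P * D.pdz i ((t : ℤ) - 1) Q))
      + (∑ t ∈ Finset.range M, ((-1 : ℝ) ^ t) • D.Dx^[t] (D.pd (i, t) Q * D.Dx P)) = 0 := by
  obtain ⟨M', rfl⟩ : ∃ M', M = M' + 1 := ⟨M - 1, by omega⟩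
  have e13 : (∑ t ∈ Finset.range (M' + 1), ((-1 : ℝ) ^ t) • D.Dx^[t] (P * D.Dx (D.pd (i, t) Q)))
      + (∑ t ∈ Finset.range (M' + 1), ((-1 : ℝ) ^ t) • D.Dx^[t] (D.pd (i, t) Q * D.Dx P))
      = ∑ t ∈ Finset.range (M' + 1), ((-1 : ℝ) ^ t) • D.Dx^[t + 1] (P * D.pd (i, t) Q) := by
    rw [← Finset.sum_add_distrib]
    refine Finset.sum_congr rfl fun t _ => ?_
    rw [← smul_add, ← D.DxI_add]
    have : P * D.Dx (D.pd (i, t) Q) + D.pd (i, t) Q * D.Dx P = D.Dx (P * D.pd (i, t) Q) := by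
      rw [D.Dx_mul]
      ring
    rw [this, ← Function.iterate_succ_apply D.Dx t]
  rw [add_right_comm, e13]
  have e1 : ∑ t ∈ Finset.range (M' + 1), ((-1 : ℝ) ^ t) • D.Dx^[t + 1] (P * D.pd (i, t) Q)
      = ∑ t ∈ Finset.range M', ((-1 : ℝ) ^ t) • D.Dx^[t + 1] (P * D.pd (i, t) Q) := by
    rw [Finset.sum_range_succ, hQ i M' (by omega), mul_zero, D.DxI_zero, smul_zero, add_zero]
  have e2 : ∑ t ∈ Finset.range (M' + 1), ((-1 : ℝ) ^ t) • D.Dx^[t] (P * D.pdz i ((t : ℤ) - 1) Q)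
      = ∑ t ∈ Finset.range M', ((-1 : ℝ) ^ (t + 1)) • D.Dx^[t + 1] (P * D.pd (i, t) Q) := by
    rw [Finset.sum_range_succ'
      (fun t => ((-1 : ℝ) ^ t) • D.Dx^[t] (P * D.pdz i ((t : ℤ) - 1) Q)) M']
    have hz : ((-1 : ℝ) ^ 0) • D.Dx^[0] (P * D.pdz i (((0 : ℕ) : ℤ) - 1) Q) = 0 := by
      rw [D.pdz_neg (by omega : ((0 : ℕ) : ℤ) - 1 < 0), mul_zero]
      simp
    rw [hz, add_zero]
    refine Finset.sum_congr rfl fun t _ => ?_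
    beta_reduce
    rw [show ((t + 1 : ℕ) : ℤ) - 1 = ((t : ℕ) : ℤ) from by push_cast; ring, D.pdz_natCast]
  rw [e1, e2, ← Finset.sum_add_distrib]
  refine Finset.sum_eq_zero fun t _ => ?_
  rw [pow_succ, mul_neg_one, neg_smul, add_neg_cancel]

end DiffPolyAlg

/-- **the bracket on 1-forms extends the Poisson bracket of local
functionals.** Let `f, g ∈ 𝒜` and set `α_i := δf/δu^i`, `β_j := δg/δu^j`.
Then for every `i`, `{α,β}_i = δh/δu^i` in `𝒜`, where
`h := Σ_{k,l} (δf/δu^k) η^{kl} ∂_x(δg/δu^l)` is the density of the Poisson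
bracket `{∫f dx, ∫g dx}` of the local functionals; that is,
`{δF, δG} = δ{F, G}` for exact 1-forms. -/
theorem bracket_of_exact_forms {n : ℕ} (hn : 1 ≤ n) {A : Type*} [CommRing A]
    [Algebra ℝ A] (D : DiffPolyAlg n A)
    (η : Fin n → Fin n → ℝ) (hη_symm : ∀ k l, η k l = η l k)
    (η' : Fin n → Fin n → ℝ)
    (hη_nondeg : ∀ i j, ∑ k, η i k * η' k j = if i = j then (1 : ℝ) else 0)
    (f g : A) :
    ∀ i : Fin n,
      D.pbracket η (D.varDer f) (D.varDer g) i =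
        D.varDer (∑ k, ∑ l, η k l • (D.varDer f k * D.Dx (D.varDer g l))) i := by
  intro i
  obtain ⟨Nf, hNf0, hNfv, -⟩ := D.van_exists f
  obtain ⟨Ng, hNg0, hNgv, -⟩ := D.van_exists g
  set N := max Nf Ng with hNdef
  have hN : 0 < N := lt_of_lt_of_le hNf0 (le_max_left _ _)
  have hVf : D.Van N f := D.van_mono hNfv (le_max_left _ _)
  have hVg : D.Van N g := D.van_mono hNgv (le_max_right _ _)
  set M := 2 * N + 2 with hMdef
  have hM : 2 * N ≤ M := by omega
  have hVh : D.Van M (∑ k, ∑ l, η k l • (D.varDer f k * D.Dx (D.varDer g l))) := by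
    refine D.van_sum fun k _ => D.van_sum fun l _ => D.van_smul _ (D.van_mul ?_ ?_)
    · exact D.van_mono (D.van_varDer hVf k) (by omega)
    · exact D.van_mono (D.van_Dx (D.van_varDer hVg l)) (by omega)
  rw [D.pbracket_eq η (D.varDer f) (D.varDer g) i (M := M)
      (D.van_mono (D.van_varDer hVf i) (by omega))
      (D.van_mono (D.van_varDer hVg i) (by omega)),
    D.varDer_eq hVh (by omega) i]
  have comm : ∀ (t : ℕ) (y : A),
      D.pd (i, t) (D.Dx y) = D.Dx (D.pd (i, t) y) + D.pdz i ((t : ℤ) - 1) y := by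
    intro t y
    rw [← D.pdz_natCast i t (D.Dx y), D.pdz_Dx, D.pdz_natCast]
  have hRHS : ∑ t ∈ Finset.range M, ((-1 : ℝ) ^ t)
        • D.Dx^[t] (D.pd (i, t) (∑ k, ∑ l, η k l • (D.varDer f k * D.Dx (D.varDer g l))))
      = ∑ k, ∑ l, η k l •
          ((∑ t ∈ Finset.range M, ((-1 : ℝ) ^ t)
              • D.Dx^[t] (D.pd (i, t) (D.varDer f k) * D.Dx (D.varDer g l)))
            + ((∑ t ∈ Finset.range M, ((-1 : ℝ) ^ t)
              • D.Dx^[t] (D.varDer f k * D.Dx (D.pd (i, t) (D.varDer g l))))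
              + (∑ t ∈ Finset.range M, ((-1 : ℝ) ^ t)
              • D.Dx^[t] (D.varDer f k * D.pdz i ((t : ℤ) - 1) (D.varDer g l))))) := by
    calc
      ∑ t ∈ Finset.range M, ((-1 : ℝ) ^ t)
          • D.Dx^[t] (D.pd (i, t) (∑ k, ∑ l, η k l • (D.varDer f k * D.Dx (D.varDer g l))))
        = ∑ t ∈ Finset.range M, ∑ k, ∑ l, η k l • (((-1 : ℝ) ^ t)
            • D.Dx^[t] (D.pd (i, t) (D.varDer f k) * D.Dx (D.varDer g l)
              + (D.varDer f k * D.Dx (D.pd (i, t) (D.varDer g l))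
                + D.varDer f k * D.pdz i ((t : ℤ) - 1) (D.varDer g l)))) := by
          refine Finset.sum_congr rfl fun t _ => ?_
          rw [D.pd_sum, D.DxI_sum, Finset.smul_sum]
          refine Finset.sum_congr rfl fun k _ => ?_
          rw [D.pd_sum, D.DxI_sum, Finset.smul_sum]
          refine Finset.sum_congr rfl fun l _ => ?_
          rw [D.pd_smul, D.pd_mul, comm t (D.varDer g l), mul_add, D.DxI_smul]
          exact smul_comm _ _ _
      _ = ∑ k, ∑ l, ∑ t ∈ Finset.range M, η k l • (((-1 : ℝ) ^ t)
            • D.Dx^[t] (D.pd (i, t) (D.varDer f k) * D.Dx (D.varDer g l)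
              + (D.varDer f k * D.Dx (D.pd (i, t) (D.varDer g l))
                + D.varDer f k * D.pdz i ((t : ℤ) - 1) (D.varDer g l)))) := by
          rw [Finset.sum_comm]
          exact Finset.sum_congr rfl fun k _ => Finset.sum_comm
      _ = ∑ k, ∑ l, η k l • ∑ t ∈ Finset.range M, (((-1 : ℝ) ^ t)
            • D.Dx^[t] (D.pd (i, t) (D.varDer f k) * D.Dx (D.varDer g l)
              + (D.varDer f k * D.Dx (D.pd (i, t) (D.varDer g l))
                + D.varDer f k * D.pdz i ((t : ℤ) - 1) (D.varDer g l)))) := by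
          exact Finset.sum_congr rfl fun k _ => Finset.sum_congr rfl fun l _ =>
            (Finset.smul_sum).symm
      _ = ∑ k, ∑ l, η k l •
          ((∑ t ∈ Finset.range M, ((-1 : ℝ) ^ t)
              • D.Dx^[t] (D.pd (i, t) (D.varDer f k) * D.Dx (D.varDer g l)))
            + ((∑ t ∈ Finset.range M, ((-1 : ℝ) ^ t)
              • D.Dx^[t] (D.varDer f k * D.Dx (D.pd (i, t) (D.varDer g l))))
              + (∑ t ∈ Finset.range M, ((-1 : ℝ) ^ t)
              • D.Dx^[t] (D.varDer f k * D.pdz i ((t : ℤ) - 1) (D.varDer g l))))) := by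
          refine Finset.sum_congr rfl fun k _ => Finset.sum_congr rfl fun l _ => ?_
          congr 1
          rw [← Finset.sum_add_distrib, ← Finset.sum_add_distrib]
          refine Finset.sum_congr rfl fun t _ => ?_
          rw [D.DxI_add, D.DxI_add, smul_add, smul_add]
  rw [hRHS]
  have hA : ∀ k l : Fin n,
      (∑ t ∈ Finset.range M, ((-1 : ℝ) ^ t)
          • D.Dx^[t] (D.pd (i, t) (D.varDer f k) * D.Dx (D.varDer g l)))
        = ∑ s ∈ Finset.range M, D.pd (k, s) (D.varDer f i) * D.Dx^[s + 1] (D.varDer g l) := by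
    intro k l
    rw [D.helmholtz hVf hN hM i k (D.Dx (D.varDer g l))]
    refine Finset.sum_congr rfl fun s _ => ?_
    rw [← Function.iterate_succ_apply D.Dx s (D.varDer g l)]
  have hB : ∀ k l : Fin n,
      (∑ t ∈ Finset.range M, ((-1 : ℝ) ^ t)
          • D.Dx^[t] (D.pd (i, t) (D.varDer g l) * D.Dx (D.varDer f k)))
        = ∑ s ∈ Finset.range M, D.pd (l, s) (D.varDer g i) * D.Dx^[s + 1] (D.varDer f k) := by
    intro k l
    rw [D.helmholtz hVg hN hM i l (D.Dx (D.varDer f k))]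
    refine Finset.sum_congr rfl fun s _ => ?_
    rw [← Function.iterate_succ_apply D.Dx s (D.varDer f k)]
  have hT : ∀ k l : Fin n,
      (∑ t ∈ Finset.range M, ((-1 : ℝ) ^ t)
          • D.Dx^[t] (D.varDer f k * D.Dx (D.pd (i, t) (D.varDer g l))))
        + (∑ t ∈ Finset.range M, ((-1 : ℝ) ^ t)
          • D.Dx^[t] (D.varDer f k * D.pdz i ((t : ℤ) - 1) (D.varDer g l)))
        = - ∑ t ∈ Finset.range M, ((-1 : ℝ) ^ t)
            • D.Dx^[t] (D.pd (i, t) (D.varDer g l) * D.Dx (D.varDer f k)) := by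
    intro k l
    have h0 := D.telescope i (D.varDer f k) (D.varDer g l) (D.van_varDer hVg l)
      (by omega : 2 * N < M)
    exact eq_neg_of_add_eq_zero_left h0
  have step : ∑ k, ∑ l, (η k l : ℝ) •
          ((∑ t ∈ Finset.range M, ((-1 : ℝ) ^ t)
              • D.Dx^[t] (D.pd (i, t) (D.varDer f k) * D.Dx (D.varDer g l)))
            + ((∑ t ∈ Finset.range M, ((-1 : ℝ) ^ t)
              • D.Dx^[t] (D.varDer f k * D.Dx (D.pd (i, t) (D.varDer g l))))
              + (∑ t ∈ Finset.range M, ((-1 : ℝ) ^ t)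
              • D.Dx^[t] (D.varDer f k * D.pdz i ((t : ℤ) - 1) (D.varDer g l)))))
      = (∑ k, ∑ l, η k l •
            ∑ s ∈ Finset.range M, D.pd (k, s) (D.varDer f i) * D.Dx^[s + 1] (D.varDer g l))
        - ∑ k, ∑ l, η k l •
            ∑ s ∈ Finset.range M, D.pd (l, s) (D.varDer g i) * D.Dx^[s + 1] (D.varDer f k) := by
    rw [← Finset.sum_sub_distrib]
    refine Finset.sum_congr rfl fun k _ => ?_
    rw [← Finset.sum_sub_distrib]
    refine Finset.sum_congr rfl fun l _ => ?_
    rw [hA k l, ← add_assoc]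
    rw [show (∑ s ∈ Finset.range M, D.pd (k, s) (D.varDer f i) * D.Dx^[s + 1] (D.varDer g l))
          + (∑ t ∈ Finset.range M, ((-1 : ℝ) ^ t)
            • D.Dx^[t] (D.varDer f k * D.Dx (D.pd (i, t) (D.varDer g l))))
          + (∑ t ∈ Finset.range M, ((-1 : ℝ) ^ t)
            • D.Dx^[t] (D.varDer f k * D.pdz i ((t : ℤ) - 1) (D.varDer g l)))
        = (∑ s ∈ Finset.range M, D.pd (k, s) (D.varDer f i) * D.Dx^[s + 1] (D.varDer g l))
          + ((∑ t ∈ Finset.range M, ((-1 : ℝ) ^ t)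
            • D.Dx^[t] (D.varDer f k * D.Dx (D.pd (i, t) (D.varDer g l))))
            + (∑ t ∈ Finset.range M, ((-1 : ℝ) ^ t)
            • D.Dx^[t] (D.varDer f k * D.pdz i ((t : ℤ) - 1) (D.varDer g l)))) from
        add_assoc _ _ _, hT k l, hB k l, ← sub_eq_add_neg, smul_sub]
  rw [step]
  have hA0 : ∑ k, ∑ s ∈ Finset.range M, ∑ l,
        η k l • (D.Dx^[s + 1] (D.varDer g l) * D.pd (k, s) (D.varDer f i))
      = ∑ k, ∑ l, η k l •
          ∑ s ∈ Finset.range M, D.pd (k, s) (D.varDer f i) * D.Dx^[s + 1] (D.varDer g l) := by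
    refine Finset.sum_congr rfl fun k _ => ?_
    rw [Finset.sum_comm]
    refine Finset.sum_congr rfl fun l _ => ?_
    rw [Finset.smul_sum]
    refine Finset.sum_congr rfl fun s _ => ?_
    rw [mul_comm (D.Dx^[s + 1] (D.varDer g l)) (D.pd (k, s) (D.varDer f i))]
  have hB0 : ∑ k, ∑ s ∈ Finset.range M, ∑ l,
        η k l • (D.Dx^[s + 1] (D.varDer f l) * D.pd (k, s) (D.varDer g i))
      = ∑ k, ∑ l, η k l •
          ∑ s ∈ Finset.range M, D.pd (l, s) (D.varDer g i) * D.Dx^[s + 1] (D.varDer f k) := by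
    have h1 : ∑ k, ∑ s ∈ Finset.range M, ∑ l,
          η k l • (D.Dx^[s + 1] (D.varDer f l) * D.pd (k, s) (D.varDer g i))
        = ∑ k, ∑ l, η k l •
            ∑ s ∈ Finset.range M, D.pd (k, s) (D.varDer g i) * D.Dx^[s + 1] (D.varDer f l) := by
      refine Finset.sum_congr rfl fun k _ => ?_
      rw [Finset.sum_comm]
      refine Finset.sum_congr rfl fun l _ => ?_
      rw [Finset.smul_sum]
      refine Finset.sum_congr rfl fun s _ => ?_
      rw [mul_comm (D.Dx^[s + 1] (D.varDer f l)) (D.pd (k, s) (D.varDer g i))]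
    rw [h1, Finset.sum_comm]
    refine Finset.sum_congr rfl fun k _ => Finset.sum_congr rfl fun l _ => ?_
    rw [← hη_symm k l]
  rw [hA0, hB0]
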